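/- Let (x₁,x₂,x₃) ∈ ℂ³ be an admissible triple whose orbit under the group of bijections generated by β₁ and β₂ is finite. Then for each i = 1,2,3 there exists a rational number rᵢ with 0 ≤ rᵢ ≤ 1 such that xᵢ = −2 cos(π rᵢ). In particular each xᵢ is real and |xᵢ| ≤ 2. -/

import Mathlib

/-- The braid-group generator `β₁`, as a bijection of `ℂ³`. -/
def braidEquiv₁ : Equiv.Perm (ℂ × ℂ × ℂ) where
  toFun p := (-p.1, p.2.2 - p.1 * p.2.1, p.2.1)
  invFun p := (-p.1, p.2.2, p.2.1 - p.1 * p.2.2)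
  left_inv := by rintro ⟨a, b, c⟩; ext <;> simp <;> ring
  right_inv := by rintro ⟨a, b, c⟩; ext <;> simp <;> ring

/-- The braid-group generator `β₂`, as a bijection of `ℂ³`. -/
def braidEquiv₂ : Equiv.Perm (ℂ × ℂ × ℂ) where
  toFun p := (p.2.2, -p.2.1, p.1 - p.2.1 * p.2.2)
  invFun p := (p.2.2 - p.1 * p.2.1, -p.2.1, p.1)
  left_inv := by rintro ⟨a, b, c⟩; ext <;> simp <;> ring
  right_inv := by rintro ⟨a, b, c⟩; ext <;> simp <;> ring

/-- The braid group: the group of bijections of `ℂ³` generated by `β₁` and `β₂`. -/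
def braidSubgroup : Subgroup (Equiv.Perm (ℂ × ℂ × ℂ)) :=
  Subgroup.closure {braidEquiv₁, braidEquiv₂}

/-- A triple is admissible if at most one of its coordinates equals zero. -/
def Admissible (p : ℂ × ℂ × ℂ) : Prop :=
  ¬(p.1 = 0 ∧ p.2.1 = 0) ∧ ¬(p.1 = 0 ∧ p.2.2 = 0) ∧ ¬(p.2.1 = 0 ∧ p.2.2 = 0)

/-! ### Auxiliary lemmas -/

section Aux

open Matrix

lemma braid_ch2 (A : Matrix (Fin 2) (Fin 2) ℂ) :
    A * A = A.trace • A - A.det • (1 : Matrix (Fin 2) (Fin 2) ℂ) := by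
  ext i j
  fin_cases i <;> fin_cases j <;>
    simp [Matrix.mul_apply, Fin.sum_univ_two, Matrix.trace_fin_two, Matrix.det_fin_two,
      Matrix.one_apply] <;> ring

lemma braid_det_sub_one (A : Matrix (Fin 2) (Fin 2) ℂ) : (A - 1).det = A.det - A.trace + 1 := by
  simp [Matrix.det_fin_two, Matrix.trace_fin_two, Matrix.sub_apply, Matrix.one_apply]
  ring

lemma braid_trace_pow (M : Matrix (Fin 2) (Fin 2) ℂ) (l : ℂ) (hl : l ≠ 0)
    (hdet : M.det = 1) (htr : M.trace = l + l⁻¹) (n : ℕ) :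
    (M ^ n).trace = l ^ n + (l⁻¹) ^ n := by
  have key : ∀ m : ℕ, (M ^ m).trace = l ^ m + (l⁻¹) ^ m ∧
      (M ^ (m+1)).trace = l ^ (m+1) + (l⁻¹) ^ (m+1) := by
    intro m
    induction m with
    | zero => refine ⟨by simp [Matrix.trace_one]; norm_num, by simpa using htr⟩
    | succ m ih =>
      refine ⟨ih.2, ?_⟩
      have hM2 : M ^ (m + 2) = M.trace • M ^ (m+1) - (1 : ℂ) • M ^ m := by
        have h1 : M ^ (m + 2) = M ^ m * (M * M) := by
          rw [pow_add]; rw [pow_two]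
        rw [h1, braid_ch2 M, hdet]
        rw [mul_sub]
        simp [mul_smul_comm, pow_succ, smul_smul]
      have htr2 : (M ^ (m+2)).trace
          = M.trace * (M ^ (m+1)).trace - (M ^ m).trace := by
        rw [hM2]
        simp [Matrix.trace_sub, Matrix.trace_smul, smul_eq_mul]
      have : (M ^ (m+1+1)).trace = (l + l⁻¹) * (l^(m+1) + (l⁻¹)^(m+1)) - (l^m + (l⁻¹)^m) := by
        rw [show m+1+1 = m+2 from rfl, htr2, htr, ih.1, ih.2]
      rw [this]
      linear_combination (l ^ m + l⁻¹ ^ m) * mul_inv_cancel₀ hl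
  exact (key n).1

lemma braid_cos_rat_reduce (q : ℚ) : ∃ r : ℚ, 0 ≤ r ∧ r ≤ 1 ∧
    Real.cos (Real.pi * r) = Real.cos (Real.pi * q) := by
  set n : ℤ := ⌊q / 2⌋ with hn
  set q' : ℚ := q - 2 * n with hq'
  have h0 : (0:ℚ) ≤ q' := by
    have := Int.floor_le (q / 2)
    rw [hq']; linarith
  have h2 : q' < 2 := by
    have := Int.lt_floor_add_one (q / 2)
    rw [hq']; linarith
  have hcos : Real.cos (Real.pi * q') = Real.cos (Real.pi * q) := by
    have : (Real.pi * q : ℝ) = Real.pi * q' + n * (2 * Real.pi) := by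
      push_cast [hq']; ring
    rw [this, Real.cos_add_int_mul_two_pi]
  by_cases h1 : q' ≤ 1
  · exact ⟨q', h0, h1, hcos⟩
  · refine ⟨2 - q', by linarith, by linarith, ?_⟩
    rw [← hcos]
    have : (Real.pi * (2 - q' : ℚ) : ℝ) = -(Real.pi * q') + (1:ℤ) * (2 * Real.pi) := by
      push_cast; ring
    rw [this, Real.cos_add_int_mul_two_pi, Real.cos_neg]

lemma braid_eq_neg_two_cos (μ : ℂ) (hμ : μ ≠ 0) (N : ℕ) (hN : N ≠ 0) (hroot : μ ^ N = 1) :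
    ∃ r : ℚ, 0 ≤ r ∧ r ≤ 1 ∧ -(μ + μ⁻¹) = ((-2 * Real.cos (Real.pi * r) : ℝ) : ℂ) := by
  have hprim := Complex.isPrimitiveRoot_exp N hN
  haveI : NeZero N := ⟨hN⟩
  obtain ⟨m, hm, hmeq⟩ := hprim.eq_pow_of_pow_eq_one hroot
  have hμeq : μ = Complex.exp (((2 * Real.pi * m / N : ℝ) : ℂ) * Complex.I) := by
    rw [← hmeq, ← Complex.exp_nat_mul]
    congr 1
    push_cast
    have : (N:ℂ) ≠ 0 := by exact_mod_cast hN
    field_simp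
  have hinv : μ⁻¹ = Complex.exp (-(((2 * Real.pi * m / N : ℝ) : ℂ) * Complex.I)) := by
    rw [hμeq, ← Complex.exp_neg]
  have hsum : μ + μ⁻¹ = 2 * Complex.cos ((2 * Real.pi * m / N : ℝ) : ℂ) := by
    rw [hinv, hμeq, Complex.cos, neg_mul]
    ring
  obtain ⟨r, hr0, hr1, hrcos⟩ := braid_cos_rat_reduce (2 * m / N)
  refine ⟨r, hr0, hr1, ?_⟩
  rw [hsum, ← Complex.ofReal_cos]
  have harg : (2 * Real.pi * m / N : ℝ) = Real.pi * ((2 * m / N : ℚ) : ℝ) := by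
    push_cast
    have : (N:ℝ) ≠ 0 := by exact_mod_cast hN
    field_simp
  rw [harg, ← hrcos]
  push_cast
  ring

/-- The key spectral lemma: if an `SL₂` matrix with trace `2 - a²` fixes a nonzero vector
after `k` iterates, then `a = -2 cos (π r)` for a rational `r ∈ [0,1]`. -/
lemma braid_spec (M : Matrix (Fin 2) (Fin 2) ℂ) (a : ℂ) (hdet : M.det = 1)
    (htr : M.trace = 2 - a ^ 2) (v : Fin 2 → ℂ) (hv : v ≠ 0) (k : ℕ) (hk : 0 < k)
    (h : (M ^ k).mulVec v = v) :
    ∃ r : ℚ, 0 ≤ r ∧ r ≤ 1 ∧ a = ((-2 * Real.cos (Real.pi * r) : ℝ) : ℂ) := by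
  obtain ⟨μ, hμroot⟩ : ∃ μ : ℂ, μ ^ 2 + a * μ + 1 = 0 := by
    obtain ⟨μ, hμ⟩ := Complex.exists_root (f := (Polynomial.X ^ 2 + Polynomial.C a * Polynomial.X
      + Polynomial.C 1 : Polynomial ℂ)) (by
        have h2 : (Polynomial.X ^ 2 + Polynomial.C a * Polynomial.X + Polynomial.C 1 :
            Polynomial ℂ).degree = 2 := by
          compute_degree!
        rw [h2]; norm_num)
    refine ⟨μ, ?_⟩
    simpa [Polynomial.IsRoot, Polynomial.eval_add, Polynomial.eval_pow] using hμ
  have hμ0 : μ ≠ 0 := by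
    intro h0; rw [h0] at hμroot; simp at hμroot
  obtain ⟨l, hl⟩ : ∃ l : ℂ, l = -μ ^ 2 := ⟨_, rfl⟩
  have hl0 : l ≠ 0 := by
    simp [hl, pow_eq_zero_iff, hμ0]
  have hainv : μ⁻¹ = -(μ + a) := by
    field_simp
    linear_combination hμroot
  have hlinv : l⁻¹ = -(μ + a) ^ 2 := by
    rw [hl, inv_neg, ← inv_pow, hainv]
    ring
  have htrl : M.trace = l + l⁻¹ := by
    rw [htr, hlinv, hl]
    linear_combination 2 * hμroot
  have hker : ((M ^ k) - 1).mulVec v = 0 := by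
    rw [Matrix.sub_mulVec, h, Matrix.one_mulVec, sub_self]
  have hdet0 : ((M ^ k) - 1).det = 0 :=
    Matrix.exists_mulVec_eq_zero_iff.mp ⟨v, hv, hker⟩
  have hdetk : (M ^ k).det = 1 := by rw [Matrix.det_pow, hdet, one_pow]
  have htrk := braid_trace_pow M l hl0 hdet htrl k
  have h2 : (2 : ℂ) - (l ^ k + (l⁻¹) ^ k) = 0 := by
    have := braid_det_sub_one (M ^ k)
    rw [hdet0, hdetk, htrk] at this
    linear_combination -this
  have hlk0 : l ^ k ≠ 0 := pow_ne_zero _ hl0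
  have hlk : l ^ k = 1 := by
    have hsq : (l ^ k - 1) ^ 2 = 0 := by
      have hinvk : (l⁻¹) ^ k = (l ^ k)⁻¹ := by rw [inv_pow]
      rw [hinvk] at h2
      field_simp at h2
      linear_combination -h2
    have h3 := pow_eq_zero_iff (n := 2) (by norm_num) |>.mp hsq
    linear_combination h3
  have hμ4k : μ ^ (4 * k) = 1 := by
    have h4 : μ ^ (4 * k) = (l ^ 2) ^ k := by
      rw [pow_mul]
      congr 1
      rw [hl]; ring
    rw [h4, ← pow_mul, mul_comm, pow_mul, hlk, one_pow]
  obtain ⟨r, hr0, hr1, hr⟩ := braid_eq_neg_two_cos μ hμ0 (4 * k) (by omega) hμ4k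
  refine ⟨r, hr0, hr1, ?_⟩
  rw [← hr, hainv]
  ring

noncomputable def Mmat₁ (a : ℂ) : Matrix (Fin 2) (Fin 2) ℂ := !![1 - a ^ 2, a; -a, 1]
noncomputable def Mmat₂ (b : ℂ) : Matrix (Fin 2) (Fin 2) ℂ := !![1, -b; b, 1 - b ^ 2]

lemma braid_beta1_sq (a b c : ℂ) :
    (braidEquiv₁ ^ 2) (a, b, c) =
      (a, (Mmat₁ a).mulVec ![b, c] 0, (Mmat₁ a).mulVec ![b, c] 1) := by
  rw [pow_two, Equiv.Perm.mul_apply]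
  simp [braidEquiv₁, Mmat₁, Matrix.mulVec, dotProduct, Fin.sum_univ_two]
  constructor <;> ring

lemma braid_beta2_sq (a b c : ℂ) :
    (braidEquiv₂ ^ 2) (a, b, c) =
      ((Mmat₂ b).mulVec ![a, c] 0, b, (Mmat₂ b).mulVec ![a, c] 1) := by
  rw [pow_two, Equiv.Perm.mul_apply]
  simp [braidEquiv₂, Mmat₂, Matrix.mulVec, dotProduct, Fin.sum_univ_two]
  constructor <;> ring

lemma braid_beta1_sq_pow (k : ℕ) (a b c : ℂ) :
    ((braidEquiv₁ ^ 2) ^ k) (a, b, c) =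
      (a, (Mmat₁ a ^ k).mulVec ![b, c] 0, (Mmat₁ a ^ k).mulVec ![b, c] 1) := by
  induction k generalizing b c with
  | zero => simp
  | succ k ih =>
    rw [pow_succ, Equiv.Perm.mul_apply, braid_beta1_sq,
      ih ((Mmat₁ a).mulVec ![b, c] 0) ((Mmat₁ a).mulVec ![b, c] 1)]
    have hv : ![(Mmat₁ a).mulVec ![b, c] 0, (Mmat₁ a).mulVec ![b, c] 1]
        = (Mmat₁ a).mulVec ![b, c] := by
      ext i; fin_cases i <;> rfl
    rw [hv, Matrix.mulVec_mulVec, ← pow_succ]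

lemma braid_beta2_sq_pow (k : ℕ) (a b c : ℂ) :
    ((braidEquiv₂ ^ 2) ^ k) (a, b, c) =
      ((Mmat₂ b ^ k).mulVec ![a, c] 0, b, (Mmat₂ b ^ k).mulVec ![a, c] 1) := by
  induction k generalizing a c with
  | zero => simp
  | succ k ih =>
    rw [pow_succ, Equiv.Perm.mul_apply, braid_beta2_sq,
      ih ((Mmat₂ b).mulVec ![a, c] 0) ((Mmat₂ b).mulVec ![a, c] 1)]
    have hv : ![(Mmat₂ b).mulVec ![a, c] 0, (Mmat₂ b).mulVec ![a, c] 1]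
        = (Mmat₂ b).mulVec ![a, c] := by
      ext i; fin_cases i <;> rfl
    rw [hv, Matrix.mulVec_mulVec, ← pow_succ]

lemma braid_exists_pow_fixed (x : ℂ × ℂ × ℂ)
    (hfin : Set.Finite {p : ℂ × ℂ × ℂ | ∃ g ∈ braidSubgroup, g x = p})
    (g : Equiv.Perm (ℂ × ℂ × ℂ)) (hg : g ∈ braidSubgroup) :
    ∃ k : ℕ, 0 < k ∧ (g ^ k) x = x := by
  have hmaps : Set.MapsTo (fun n : ℕ => (g ^ n) x) Set.univ
      {p : ℂ × ℂ × ℂ | ∃ h ∈ braidSubgroup, h x = p} := by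
    intro n _
    exact ⟨g ^ n, pow_mem hg n, rfl⟩
  obtain ⟨m, -, n, -, hmn, heq⟩ :=
    Set.infinite_univ.exists_ne_map_eq_of_mapsTo hmaps hfin
  rcases lt_or_gt_of_ne hmn with hlt | hlt
  · refine ⟨n - m, by omega, ?_⟩
    have h1 : g ^ n = g ^ m * g ^ (n - m) := by rw [← pow_add]; congr 1; omega
    rw [h1, Equiv.Perm.mul_apply] at heq
    exact (g ^ m).injective heq.symm
  · refine ⟨m - n, by omega, ?_⟩
    have h1 : g ^ m = g ^ n * g ^ (m - n) := by rw [← pow_add]; congr 1; omega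
    rw [h1, Equiv.Perm.mul_apply] at heq
    exact (g ^ n).injective heq

lemma braid_fix_first (a b c : ℂ) (hbc : ¬(b = 0 ∧ c = 0)) (k : ℕ) (hk : 0 < k)
    (hfix : ((braidEquiv₁ ^ 2) ^ k) (a, b, c) = (a, b, c)) :
    ∃ r : ℚ, 0 ≤ r ∧ r ≤ 1 ∧ a = ((-2 * Real.cos (Real.pi * r) : ℝ) : ℂ) := by
  rw [braid_beta1_sq_pow] at hfix
  have hvec : (Mmat₁ a ^ k).mulVec ![b, c] = ![b, c] := by
    ext i
    fin_cases i
    · exact congrArg (fun p => p.2.1) hfix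
    · exact congrArg (fun p => p.2.2) hfix
  refine braid_spec (Mmat₁ a) a ?_ ?_ ![b, c] ?_ k hk hvec
  · simp [Mmat₁, Matrix.det_fin_two]; ring
  · simp [Mmat₁, Matrix.trace_fin_two]; ring
  · intro h0
    exact hbc ⟨congrFun h0 0, congrFun h0 1⟩

lemma braid_fix_second (a b c : ℂ) (hac : ¬(a = 0 ∧ c = 0)) (k : ℕ) (hk : 0 < k)
    (hfix : ((braidEquiv₂ ^ 2) ^ k) (a, b, c) = (a, b, c)) :
    ∃ r : ℚ, 0 ≤ r ∧ r ≤ 1 ∧ b = ((-2 * Real.cos (Real.pi * r) : ℝ) : ℂ) := by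
  rw [braid_beta2_sq_pow] at hfix
  have hvec : (Mmat₂ b ^ k).mulVec ![a, c] = ![a, c] := by
    ext i
    fin_cases i
    · exact congrArg (fun p => p.1) hfix
    · exact congrArg (fun p => p.2.2) hfix
  refine braid_spec (Mmat₂ b) b ?_ ?_ ![a, c] ?_ k hk hvec
  · simp [Mmat₂, Matrix.det_fin_two]; ring
  · simp [Mmat₂, Matrix.trace_fin_two]; ring
  · intro h0
    exact hac ⟨congrFun h0 0, congrFun h0 1⟩

end Aux

/-- If an admissible triple has a finite orbit under the braid group,
then each coordinate has the form `-2 cos(π r)` with `r ∈ [0,1]` rational; in particular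
each coordinate is real with absolute value at most `2`. -/
theorem finite_orbit_coords_are_cosines (x : ℂ × ℂ × ℂ) (hadm : Admissible x)
    (hfin : Set.Finite {p : ℂ × ℂ × ℂ | ∃ g ∈ braidSubgroup, g x = p}) :
    (∃ r₁ : ℚ, 0 ≤ r₁ ∧ r₁ ≤ 1 ∧ x.1 = ((-2 * Real.cos (Real.pi * r₁) : ℝ) : ℂ)) ∧
    (∃ r₂ : ℚ, 0 ≤ r₂ ∧ r₂ ≤ 1 ∧ x.2.1 = ((-2 * Real.cos (Real.pi * r₂) : ℝ) : ℂ)) ∧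
    (∃ r₃ : ℚ, 0 ≤ r₃ ∧ r₃ ≤ 1 ∧ x.2.2 = ((-2 * Real.cos (Real.pi * r₃) : ℝ) : ℂ)) ∧
    (x.1.im = 0 ∧ x.2.1.im = 0 ∧ x.2.2.im = 0) ∧
    (‖x.1‖ ≤ 2 ∧ ‖x.2.1‖ ≤ 2 ∧ ‖x.2.2‖ ≤ 2) := by
  obtain ⟨a, b, c⟩ := x
  obtain ⟨h12, h13, h23⟩ := hadm
  simp only at h12 h13 h23
  have hmem₁ : braidEquiv₁ ∈ braidSubgroup :=
    Subgroup.subset_closure (Set.mem_insert _ _)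
  have hmem₂ : braidEquiv₂ ∈ braidSubgroup :=
    Subgroup.subset_closure (Set.mem_insert_of_mem _ rfl)
  -- first coordinate
  obtain ⟨k₁, hk₁, hfix₁⟩ := braid_exists_pow_fixed _ hfin (braidEquiv₁ ^ 2) (pow_mem hmem₁ 2)
  have H1 := braid_fix_first a b c h23 k₁ hk₁ hfix₁
  -- second coordinate
  obtain ⟨k₂, hk₂, hfix₂⟩ := braid_exists_pow_fixed _ hfin (braidEquiv₂ ^ 2) (pow_mem hmem₂ 2)
  have H2 := braid_fix_second a b c h13 k₂ hk₂ hfix₂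
  -- third coordinate: conjugate β₁² by β₂
  obtain ⟨k₃, hk₃, hfix₃⟩ := braid_exists_pow_fixed _ hfin
    (braidEquiv₂⁻¹ * braidEquiv₁ ^ 2 * (braidEquiv₂⁻¹)⁻¹)
    (mul_mem (mul_mem (inv_mem hmem₂) (pow_mem hmem₁ 2)) (inv_mem (inv_mem hmem₂)))
  rw [conj_pow] at hfix₃
  have hfix₃' : ((braidEquiv₁ ^ 2) ^ k₃) (braidEquiv₂ (a, b, c)) = braidEquiv₂ (a, b, c) := by
    have := congrArg braidEquiv₂ hfix₃
    simpa [Equiv.Perm.mul_apply] using this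
  have hy : braidEquiv₂ (a, b, c) = (c, -b, a - b * c) := rfl
  rw [hy] at hfix₃'
  have H3 := braid_fix_first c (-b) (a - b * c) (by
    rintro ⟨hb0, hac0⟩
    have hb : b = 0 := by simpa using hb0
    have ha : a = 0 := by rw [hb] at hac0; simpa using hac0
    exact h12 ⟨ha, hb⟩) k₃ hk₃ hfix₃'
  -- package everything
  obtain ⟨r₁, hr₁0, hr₁1, hr₁⟩ := H1
  obtain ⟨r₂, hr₂0, hr₂1, hr₂⟩ := H2
  obtain ⟨r₃, hr₃0, hr₃1, hr₃⟩ := H3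
  have habs : ∀ r : ℚ, |(-2 * Real.cos (Real.pi * r) : ℝ)| ≤ 2 := by
    intro r
    rw [abs_le]
    constructor <;> nlinarith [Real.cos_le_one (Real.pi * (r:ℝ)), Real.neg_one_le_cos (Real.pi * (r:ℝ))]
  refine ⟨⟨r₁, hr₁0, hr₁1, hr₁⟩, ⟨r₂, hr₂0, hr₂1, hr₂⟩, ⟨r₃, hr₃0, hr₃1, hr₃⟩, ?_, ?_⟩
  · simp only [hr₁, hr₂, hr₃]
    exact ⟨Complex.ofReal_im _, Complex.ofReal_im _, Complex.ofReal_im _⟩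
  · simp only [hr₁, hr₂, hr₃, Complex.norm_real, Real.norm_eq_abs]
    exact ⟨habs r₁, habs r₂, habs r₃⟩
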